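/- For the map f : ℂ → ℂ defined by f(z) = φ(z) + T(Im φ(z)), where φ(0) = 0, φ(z) = z²/|z| for z ≠ 0, and T(s) = 2|s|/√3 + 2, and for the closed sector B̄ = {z ∈ ℂ : |Im z| ≤ √3·Re z}, one has f(B̄) = f(−B̄) = {w ∈ ℂ : w − 2 ∈ B̄}; that is, the image of B̄ (and equally of its reflection −B̄) under f is exactly the translate of B̄ by two units to the right. -/

import Mathlib

open Complex

/-- The degree-two angle-doubling map `φ(r e^{iθ}) = r e^{2iθ}`. -/
noncomputable def phiMap (z : ℂ) : ℂ :=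
  if z = 0 then 0 else z ^ 2 / (‖z‖ : ℂ)

/-- The translation amount `T(s) = 2|s|/√3 + 2`. -/
noncomputable def Tshift (s : ℝ) : ℝ := 2 * |s| / Real.sqrt 3 + 2

/-- The map `f(z) = φ(z) + T(Im φ(z))`. -/
noncomputable def fMap (z : ℂ) : ℂ := phiMap z + (Tshift ((phiMap z).im) : ℂ)

/-- The closed sector of points with argument in `[-π/3, π/3]` (and `0`). -/
def closedSector : Set ℂ := {z : ℂ | |z.im| ≤ Real.sqrt 3 * z.re}

private lemma sqrt3_pos : 0 < Real.sqrt 3 := Real.sqrt_pos.2 (by norm_num)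

private lemma aux_key (R a b : ℝ) (hR0 : 0 ≤ R) (hR2 : R ^ 2 = a * a + b * b)
    (h3 : 3 * a ^ 2 ≤ b ^ 2) : 0 ≤ R + 2 * a := by
  nlinarith [sq_nonneg (R + 2 * a), sq_nonneg (R - 2 * a)]

private lemma sqrt3_sq : Real.sqrt 3 ^ 2 = 3 := Real.sq_sqrt (by norm_num)

private lemma phiMap_neg (z : ℂ) : phiMap (-z) = phiMap z := by
  by_cases hz : z = 0
  · simp [hz]
  · have h1 : (-z : ℂ) ≠ 0 := neg_ne_zero.2 hz
    simp [phiMap, hz, h1, norm_neg]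

/-- Forward inequality: for `z` in the sector, `√3 Re(φ z) + |Im(φ z)| ≥ 0`. -/
private lemma fwd (z : ℂ) (hz : z ∈ closedSector) :
    0 ≤ Real.sqrt 3 * (phiMap z).re + |(phiMap z).im| := by
  by_cases h0 : z = 0
  · simp [h0, phiMap]
  · set x := z.re with hx
    set y := z.im with hy
    have hsec : |y| ≤ Real.sqrt 3 * x := hz
    have hx0 : 0 ≤ x := by
      nlinarith [abs_nonneg y, sqrt3_pos]
    have hr : 0 < ‖z‖ := norm_pos_iff.mpr h0
    have hre : (phiMap z).re = (x * x - y * y) / ‖z‖ := by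
      simp [phiMap, h0, pow_two, Complex.div_ofReal_re, Complex.mul_re, hx, hy]
    have him : (phiMap z).im = (x * y + y * x) / ‖z‖ := by
      simp [phiMap, h0, pow_two, Complex.div_ofReal_im, Complex.mul_im, hx, hy]
    rw [hre, him]
    have habs : |(x * y + y * x) / ‖z‖| = 2 * x * |y| / ‖z‖ := by
      rw [abs_div, abs_of_pos hr]
      congr 1
      rw [show x * y + y * x = 2 * x * y by ring, abs_mul,
        _root_.abs_of_nonneg (by linarith : (0:ℝ) ≤ 2 * x)]
    rw [habs, show Real.sqrt 3 * ((x * x - y * y) / ‖z‖)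
        = Real.sqrt 3 * (x * x - y * y) / ‖z‖ by ring, ← add_div]
    apply div_nonneg _ (le_of_lt hr)
    have key : 0 ≤ (Real.sqrt 3 * x - |y|) * (x + Real.sqrt 3 * |y|) := by
      apply mul_nonneg (by linarith)
      exact add_nonneg hx0 (mul_nonneg sqrt3_pos.le (abs_nonneg y))
    have t0 : y * y = |y| * |y| := (abs_mul_abs_self y).symm
    have e : Real.sqrt 3 * (x * x - y * y) + 2 * x * |y|
        = (Real.sqrt 3 * x - |y|) * (x + Real.sqrt 3 * |y|) := by
      linear_combination (-Real.sqrt 3) * t0 + (-(x * |y|)) * sqrt3_sq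
    rw [e]; exact key

/-- Key surjectivity construction: any `v` with `√3 Re v + |Im v| ≥ 0` is
`phiMap` of a point of the sector. -/
private lemma key_exists (v : ℂ) (h : 0 ≤ Real.sqrt 3 * v.re + |v.im|) :
    ∃ z ∈ closedSector, phiMap z = v := by
  by_cases hv : v = 0
  · exact ⟨0, by simp [closedSector], by simp [phiMap, hv]⟩
  · obtain ⟨a, ha⟩ : ∃ a, v.re = a := ⟨_, rfl⟩
    obtain ⟨b, hb⟩ : ∃ b, v.im = b := ⟨_, rfl⟩
    rw [ha, hb] at h
    obtain ⟨R, hR⟩ : ∃ R, ‖v‖ = R := ⟨_, rfl⟩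
    have hR0 : 0 < R := hR ▸ norm_pos_iff.mpr hv
    have hR2 : R ^ 2 = a * a + b * b := by
      rw [← hR, ← ha, ← hb, Complex.sq_norm, Complex.normSq_apply]
    have haR : |a| ≤ R := ha ▸ hR ▸ Complex.abs_re_le_norm v
    have hbR : |b| ≤ R := hb ▸ hR ▸ Complex.abs_im_le_norm v
    have hRa : 0 ≤ (R + a) / 2 := by
      have := abs_nonneg a
      have := neg_abs_le a
      linarith
    have hRa' : 0 ≤ (R - a) / 2 := by
      have := le_abs_self a
      linarith
    obtain ⟨x, hxdef⟩ : ∃ x, x = Real.sqrt ((R + a) / 2) := ⟨_, rfl⟩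
    obtain ⟨y, hydef⟩ : ∃ y, y = Real.sign b * Real.sqrt ((R - a) / 2) := ⟨_, rfl⟩
    have hx2 : x ^ 2 = (R + a) / 2 := by rw [hxdef]; exact Real.sq_sqrt hRa
    have hx0 : 0 ≤ x := hxdef ▸ Real.sqrt_nonneg _
    -- key facts
    have hxy2 : x ^ 2 - y ^ 2 = a ∧ x ^ 2 + y ^ 2 = R ∧ 2 * (x * y) = b := by
      by_cases hb0 : b = 0
      · have ha0 : 0 ≤ a := by
          rw [hb0] at h; simp at h
          nlinarith [sqrt3_pos]
        have haR' : a = R := by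
          nlinarith [hb0]
        have hy0 : y = 0 := by
          simp [hydef, hb0, Real.sign_zero]
        constructor
        · rw [hy0, hx2]; simp; linarith
        constructor
        · rw [hy0, hx2]; simp; linarith
        · rw [hy0, hb0]; ring
      · have hsgn : Real.sign b * Real.sign b = 1 := by
          rcases lt_or_gt_of_ne hb0 with h1 | h1
          · rw [Real.sign_of_neg h1]; norm_num
          · rw [Real.sign_of_pos h1]; norm_num
        have hy2 : y ^ 2 = (R - a) / 2 := by
          rw [hydef, mul_pow]
          rw [Real.sq_sqrt hRa']
          rw [pow_two, hsgn, one_mul]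
        have hprod : Real.sqrt ((R + a) / 2) * Real.sqrt ((R - a) / 2)
            = |b| / 2 := by
          rw [← Real.sqrt_mul hRa]
          have : (R + a) / 2 * ((R - a) / 2) = (b / 2) ^ 2 := by
            nlinarith
          rw [this, Real.sqrt_sq_eq_abs, abs_div]
          norm_num
        constructor
        · rw [hx2, hy2]; ring
        constructor
        · rw [hx2, hy2]; ring
        · rw [hydef, hxdef]
          rw [show 2 * (Real.sqrt ((R + a) / 2) * (Real.sign b * Real.sqrt ((R - a) / 2)))
              = Real.sign b * (2 * (Real.sqrt ((R + a) / 2) * Real.sqrt ((R - a) / 2))) by ring,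
            hprod]
          rw [show Real.sign b * (2 * (|b| / 2)) = Real.sign b * |b| by ring]
          rcases lt_or_gt_of_ne hb0 with h1 | h1
          · rw [Real.sign_of_neg h1, abs_of_neg h1]; ring
          · rw [Real.sign_of_pos h1, abs_of_pos h1]; ring
    obtain ⟨hd, hs, hp⟩ := hxy2
    obtain ⟨s, hsdef⟩ : ∃ s, s = Real.sqrt R := ⟨_, rfl⟩
    have hs2 : s ^ 2 = R := by rw [hsdef]; exact Real.sq_sqrt (le_of_lt hR0)
    have hs0 : 0 < s := hsdef ▸ Real.sqrt_pos.2 hR0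
    obtain ⟨z, hzdef⟩ : ∃ z : ℂ, z = ⟨s * x, s * y⟩ := ⟨_, rfl⟩
    have hzre : z.re = s * x := by rw [hzdef]
    have hzim : z.im = s * y := by rw [hzdef]
    have hzabs : ‖z‖ = R := by
      rw [← Real.sqrt_sq (le_of_lt hR0)]
      rw [Complex.norm_def, Complex.normSq_apply, hzre, hzim]
      congr 1
      linear_combination (x ^ 2 + y ^ 2) * hs2 + R * hs
    have hz0 : z ≠ 0 := by
      intro hc
      rw [hc] at hzabs
      simp at hzabs
      exact absurd hzabs.symm (ne_of_gt hR0)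
    refine ⟨z, ?_, ?_⟩
    · -- z in the sector
      show |z.im| ≤ Real.sqrt 3 * z.re
      rw [hzim, hzre, abs_mul, abs_of_pos hs0]
      rw [show Real.sqrt 3 * (s * x) = s * (Real.sqrt 3 * x) by ring]
      apply mul_le_mul_of_nonneg_left _ (le_of_lt hs0)
      -- |y| ≤ √3 x
      have hyabs : |y| ≤ Real.sqrt ((R - a) / 2) := by
        rw [hydef, abs_mul]
        rw [_root_.abs_of_nonneg (Real.sqrt_nonneg _)]
        have h1 : |Real.sign b| ≤ 1 := by
          rcases Real.sign_apply_eq b with h1 | h1 | h1 <;> rw [h1] <;> norm_num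
        nlinarith [Real.sqrt_nonneg ((R - a) / 2), abs_nonneg (Real.sign b)]
      refine le_trans hyabs ?_
      rw [show Real.sqrt 3 * x = Real.sqrt (3 * ((R + a) / 2)) by
        rw [hxdef, Real.sqrt_mul (by norm_num)]]
      apply Real.sqrt_le_sqrt
      -- (R - a)/2 ≤ 3 (R+a)/2  ⇔  0 ≤ R + 2a
      have hkey : 0 ≤ R + 2 * a := by
        rcases le_or_gt 0 a with h1 | h1
        · linarith
        · have hba : -(Real.sqrt 3 * a) ≤ |b| := by linarith
          have hba0 : (0:ℝ) ≤ -(Real.sqrt 3 * a) := by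
            have := mul_nonneg sqrt3_pos.le (neg_nonneg.2 h1.le)
            linarith [this]
          have h4 := mul_self_le_mul_self hba0 hba
          have h5 : -(Real.sqrt 3 * a) * -(Real.sqrt 3 * a) = 3 * a ^ 2 := by
            linear_combination a ^ 2 * sqrt3_sq
          have h6 : |b| * |b| = b ^ 2 := by rw [abs_mul_abs_self]; ring
          rw [h5, h6] at h4
          exact aux_key R a b hR0.le hR2 h4
      linarith
    · -- phiMap z = v
      have hzsq : z ^ 2 = (R : ℂ) * v := by
        apply Complex.ext
        · rw [pow_two, Complex.mul_re, Complex.re_ofReal_mul, hzre, hzim, ha]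
          linear_combination (x ^ 2 - y ^ 2) * hs2 + R * hd
        · rw [pow_two, Complex.mul_im, Complex.im_ofReal_mul, hzre, hzim, hb]
          linear_combination 2 * x * y * hs2 + R * hp
      rw [phiMap, if_neg hz0, hzabs, hzsq]
      exact mul_div_cancel_left₀ v (by exact_mod_cast ne_of_gt hR0)

theorem fMap_image_of_closed_sector :
    fMap '' closedSector = {w : ℂ | w - 2 ∈ closedSector} ∧
    fMap '' {z : ℂ | -z ∈ closedSector} = {w : ℂ | w - 2 ∈ closedSector} := by
  have hmain : fMap '' closedSector = {w : ℂ | w - 2 ∈ closedSector} := by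
    ext w
    constructor
    · rintro ⟨z, hz, rfl⟩
      have h := fwd z hz
      show (fMap z - 2) ∈ closedSector
      show |(fMap z - 2).im| ≤ Real.sqrt 3 * (fMap z - 2).re
      set v := phiMap z with hv
      have him : (fMap z - 2).im = v.im := by
        simp [fMap, Tshift, hv]
      have hre : (fMap z - 2).re = v.re + 2 * |v.im| / Real.sqrt 3 := by
        simp [fMap, Tshift]
        ring
      rw [him, hre, mul_add]
      rw [show Real.sqrt 3 * (2 * |v.im| / Real.sqrt 3) = 2 * |v.im| by
        field_simp]
      linarith
    · intro hw
      have hw' : |(w - 2).im| ≤ Real.sqrt 3 * (w - 2).re := hw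
      set A := (w - 2).re with hA
      set B := (w - 2).im with hB
      set v : ℂ := ⟨A - 2 * |B| / Real.sqrt 3, B⟩ with hv
      have hcond : 0 ≤ Real.sqrt 3 * v.re + |v.im| := by
        show 0 ≤ Real.sqrt 3 * (A - 2 * |B| / Real.sqrt 3) + |B|
        rw [mul_sub, show Real.sqrt 3 * (2 * |B| / Real.sqrt 3) = 2 * |B| by field_simp]
        linarith
      obtain ⟨z, hzS, hzφ⟩ := key_exists v hcond
      refine ⟨z, hzS, ?_⟩
      rw [fMap, hzφ]
      apply Complex.ext
      · show v.re + _ = w.re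
        have : v.im = B := rfl
        simp [this, Tshift, hv]
        have hwre : A = w.re - 2 := by simp [hA]
        rw [hwre]
        ring
      · show v.im + _ = w.im
        have : v.im = B := rfl
        simp [this, Tshift, hB]
  have hfneg : ∀ z : ℂ, fMap (-z) = fMap z := by
    intro z
    rw [fMap, fMap, phiMap_neg]
  refine ⟨hmain, ?_⟩
  rw [← hmain]
  apply Set.eq_of_subset_of_subset
  · rintro w ⟨z, hz, rfl⟩
    exact ⟨-z, hz, hfneg z⟩
  · rintro w ⟨z, hz, rfl⟩
    exact ⟨-z, by simpa using hz, (hfneg z).symm ▸ rfl⟩
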